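/- Let (Y, d) be a metric space, c: ℝ → Y an isometric embedding, and b > 0 such that for every x ∈ Y and every y ∈ π_c(x), the set π_c(B(x, d(x, y))) has diameter at most b (where π_c denotes nonempty closest-point projection to c(ℝ)). Let c': ℝ → Y be another isometric embedding with the same property for the constant b. Suppose O = c(0), O' = c'(0), π_{c'}(c(ℝ)) ⊆ B(O', R + 4b) and π_c(c'(ℝ)) ⊆ B(O, R + 4b) for some R > 0. Then the sets Π(c, R + 6b) = {x ∈ Y : π_c(x) ⊆ c([R + 6b, ∞))} and Π(c', R + 6b) = {x ∈ Y : π_{c'}(x) ⊆ c'([R + 6b, ∞))} are disjoint. -/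
import Mathlib


open Set Metric

/-- The closest-point projection of `x` to the image of `c`. -/
def proj {Y : Type*} [MetricSpace Y] (c : ℝ → Y) (x : Y) : Set Y :=
  {y ∈ Set.range c | ∀ z ∈ Set.range c, dist x y ≤ dist x z}

/-- The projection of a subset to the image of `c`. -/
def projSet {Y : Type*} [MetricSpace Y] (c : ℝ → Y) (A : Set Y) : Set Y :=
  ⋃ x ∈ A, proj c x

lemma pingpong_key {Y : Type*} [MetricSpace Y]
    (c c' : ℝ → Y) (hc' : Isometry c')
    (hne' : ∀ x : Y, (proj c' x).Nonempty) (b : ℝ) (hb : 0 < b)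
    (hcontr' : ∀ x : Y, ∀ y ∈ proj c' x,
      Metric.diam (projSet c' (closedBall x (dist x y))) ≤ b)
    (R : ℝ) (hR : 0 < R)
    (hbd : projSet c' (Set.range c) ⊆ closedBall (c' 0) (R + 4 * b))
    (x : Y) (hx' : proj c' x ⊆ c' '' Ici (R + 6 * b))
    (y : Y) (hy : y ∈ proj c x) (z : Y) (hz : z ∈ proj c' x)
    (hd : dist x y ≤ dist x z) : False := by
  obtain ⟨w, hw⟩ := hne' y
  -- w is in the projection of range c
  have hwmem : w ∈ projSet c' (Set.range c) := by
    exact Set.mem_biUnion hy.1 hw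
  have hw4 : dist w (c' 0) ≤ R + 4 * b := mem_closedBall.mp (hbd hwmem)
  -- z is far out
  obtain ⟨t, ht, htz⟩ := hx' hz
  have ht' : R + 6 * b ≤ t := mem_Ici.mp ht
  have hz6 : R + 6 * b ≤ dist z (c' 0) := by
    rw [← htz, hc'.dist_eq, Real.dist_eq, sub_zero, abs_of_nonneg (by linarith)]
    linarith
  -- the projection set of the ball is bounded
  set S := projSet c' (closedBall x (dist x z)) with hS
  have hSsub : S ⊆ closedBall (c' 0) (2 * (dist x z + dist x (c' 0))) := by
    rintro v hv
    obtain ⟨u, hu, hv⟩ := Set.mem_iUnion₂.mp hv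
    have h1 : dist u v ≤ dist u (c' 0) := hv.2 (c' 0) ⟨0, rfl⟩
    have h2 : dist u x ≤ dist x z := mem_closedBall.mp hu
    have h3 : dist u (c' 0) ≤ dist u x + dist x (c' 0) := dist_triangle _ _ _
    have h4 : dist v (c' 0) ≤ dist v u + dist u (c' 0) := dist_triangle _ _ _
    rw [mem_closedBall]
    rw [dist_comm] at h1
    linarith
  have hSbdd : Bornology.IsBounded S :=
    (isBounded_closedBall).subset hSsub
  have hzS : z ∈ S := Set.mem_biUnion (mem_closedBall.mpr (by simp [dist_nonneg])) hz
  have hwS : w ∈ S := Set.mem_biUnion (mem_closedBall.mpr (by rw [dist_comm]; exact hd)) hw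
  have hdzw : dist z w ≤ b :=
    le_trans (dist_le_diam_of_mem hSbdd hzS hwS) (hcontr' x z hz)
  have : dist z (c' 0) ≤ dist z w + dist w (c' 0) := dist_triangle _ _ _
  linarith

/-- Abstract Corollary 5.6: under the contraction property for projections to two geodesic
lines `c`, `c'` and the bounded-projection property between them, the ping-pong sets
`Π(c, R+6b)` and `Π(c', R+6b)` are disjoint. -/
theorem pingpong_sets_disjoint {Y : Type*} [MetricSpace Y]
    (c c' : ℝ → Y) (hc : Isometry c) (hc' : Isometry c')
    (hne : ∀ x : Y, (proj c x).Nonempty) (hne' : ∀ x : Y, (proj c' x).Nonempty)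
    (b : ℝ) (hb : 0 < b)
    (hcontr : ∀ x : Y, ∀ y ∈ proj c x,
      Metric.diam (projSet c (closedBall x (dist x y))) ≤ b)
    (hcontr' : ∀ x : Y, ∀ y ∈ proj c' x,
      Metric.diam (projSet c' (closedBall x (dist x y))) ≤ b)
    (R : ℝ) (hR : 0 < R)
    (hbd : projSet c' (Set.range c) ⊆ closedBall (c' 0) (R + 4 * b))
    (hbd' : projSet c (Set.range c') ⊆ closedBall (c 0) (R + 4 * b)) :
    Disjoint {x : Y | proj c x ⊆ c '' Ici (R + 6 * b)}
      {x : Y | proj c' x ⊆ c' '' Ici (R + 6 * b)} := by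
  rw [Set.disjoint_left]
  intro x hx hx'
  obtain ⟨y, hy⟩ := hne x
  obtain ⟨z, hz⟩ := hne' x
  rcases le_total (dist x y) (dist x z) with h | h
  · exact pingpong_key c c' hc' hne' b hb hcontr' R hR hbd x hx' y hy z hz h
  · exact pingpong_key c' c hc hne b hb hcontr R hR hbd' x hx z hz y hy h
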